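/- Let W be a Coxeter group. If u, u', v, v' ∈ W satisfy u ≤ u' and v ≤ v' in the strong Bruhat order, then u ∘ v ≤ u' ∘ v', where ∘ denotes the Demazure product. -/

import Mathlib

open scoped Classical


open Polynomial

namespace PaperBase

variable {B : Type*} {W : Type*} [Group W] {M : CoxeterMatrix B} (cs : CoxeterSystem M W)

/-- The strong Bruhat order: `u ≤ w` iff some reduced word for `w` has a sublist that is a
reduced word for `u`. -/
def BruhatLE (u w : W) : Prop :=
  ∃ ω : List B, cs.IsReduced ω ∧ cs.wordProd ω = w ∧
    ∃ ω' : List B, ω'.Sublist ω ∧ cs.IsReduced ω' ∧ cs.wordProd ω' = u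

/-- The strict strong Bruhat order. -/
def BruhatLT (u w : W) : Prop := BruhatLE cs u w ∧ u ≠ w

/-- The right weak Bruhat order: `u ≤_R w` iff `ℓ(w) = ℓ(u) + ℓ(u⁻¹ w)`. -/
def RWeakLE (u w : W) : Prop := cs.length w = cs.length u + cs.length (u⁻¹ * w)

/-- `U_ω ↑ v` along a word `ω`. -/
noncomputable def upLWord (ω : List B) (v : W) : W :=
  ω.foldr (fun i x => if cs.length x < cs.length (cs.simple i * x) then cs.simple i * x else x) v

/-- `U_ω ↓ v` along a word `ω`. -/
noncomputable def downLWord (ω : List B) (v : W) : W :=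
  ω.foldr (fun i x => if cs.length (cs.simple i * x) < cs.length x then cs.simple i * x else x) v

/-- `v ↑ U_ω` along a word `ω`. -/
noncomputable def upRWord (v : W) (ω : List B) : W :=
  ω.foldl (fun x i => if cs.length x < cs.length (x * cs.simple i) then x * cs.simple i else x) v

/-- `v ↓ U_ω` along a word `ω`. -/
noncomputable def downRWord (v : W) (ω : List B) : W :=
  ω.foldl (fun x i => if cs.length (x * cs.simple i) < cs.length x then x * cs.simple i else x) v

/-- A chosen reduced word for `w`. -/
noncomputable def rword (w : W) : List B := (cs.exists_reduced_word' w).choose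

theorem rword_isReduced (w : W) : cs.IsReduced (rword cs w) :=
  (cs.exists_reduced_word' w).choose_spec.1

theorem rword_wordProd (w : W) : cs.wordProd (rword cs w) = w :=
  ((cs.exists_reduced_word' w).choose_spec.2).symm

/-- `U_w ↑ v` for `w : W`, computed along a chosen reduced word for `w`. -/
noncomputable def upL (w v : W) : W := upLWord cs (rword cs w) v

/-- `U_w ↓ v` for `w : W`. -/
noncomputable def downL (w v : W) : W := downLWord cs (rword cs w) v

/-- `v ↑ U_w` for `w : W`. -/
noncomputable def upR (v w : W) : W := upRWord cs v (rword cs w)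

/-- `v ↓ U_w` for `w : W`. -/
noncomputable def downR (v w : W) : W := downRWord cs v (rword cs w)

/-- The Demazure (0-Hecke) product `u ∘ w`. -/
noncomputable def dem (u w : W) : W := upRWord cs u (rword cs w)

/-- Left multiplication by the Hecke algebra generator `T_{s i}` on the free
`ℤ[q]`-module with basis `{T_w}`, realized as `W →₀ ℤ[q]`:
`T_s T_w = T_{sw}` if `sw > w`, and `T_s T_w = (q-1) T_w + q T_{sw}` if `sw < w`. -/
noncomputable def heckeMulSimple (i : B) (f : W →₀ Polynomial ℤ) : W →₀ Polynomial ℤ :=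
  f.sum fun w c =>
    if cs.length w < cs.length (cs.simple i * w)
    then Finsupp.single (cs.simple i * w) c
    else Finsupp.single w ((X - 1) * c) + Finsupp.single (cs.simple i * w) (X * c)

/-- Left multiplication by `T_{π ω}` along a word `ω`. -/
noncomputable def heckeMulWord (ω : List B) (f : W →₀ Polynomial ℤ) : W →₀ Polynomial ℤ :=
  ω.foldr (heckeMulSimple cs) f

/-- The product `T_x T_y` in the Hecke algebra, expanded in the basis `{T_w}`. -/
noncomputable def TT (x y : W) : W →₀ Polynomial ℤ :=
  heckeMulWord cs (rword cs x) (Finsupp.single y 1)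

open Classical in
/-- The linear functional `Λ_w` with `Λ_w (T_y) = q^{ℓ(y)}` if `y ≤ w`, else `0`. -/
noncomputable def Lam (w : W) (f : W →₀ Polynomial ℤ) : Polynomial ℤ :=
  f.sum fun y c => if BruhatLE cs y w then X ^ cs.length y * c else 0

/-- `Θ(x, y, w) = Λ_w (T_x T_{y⁻¹})`. -/
noncomputable def Theta (x y w : W) : Polynomial ℤ := Lam cs w (TT cs x y⁻¹)


section Aux

theorem simple_conj_eq_simple_iff (i : B) (t : W) :
    cs.simple i * t * cs.simple i = cs.simple i ↔ t = cs.simple i := by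
  constructor
  · intro h
    have := congrArg (fun z => cs.simple i * z * cs.simple i) h
    simpa [mul_assoc, cs.simple_mul_simple_cancel_left,
      cs.simple_mul_simple_cancel_right, cs.simple_mul_simple_self] using this
  · rintro rfl
    rw [cs.simple_mul_simple_self, one_mul]

/-- The Tits permutation representation generator. -/
noncomputable def prep (i : B) : Equiv.Perm (W × ZMod 2) :=
  Function.Involutive.toPerm
    (fun p => (cs.simple i * p.1 * cs.simple i, p.2 + if p.1 = cs.simple i then 1 else 0))
    (by
      rintro ⟨t, e⟩
      simp only [simple_conj_eq_simple_iff, Prod.mk.injEq]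
      constructor
      · simp [mul_assoc, cs.simple_mul_simple_cancel_left,
          cs.simple_mul_simple_self, cs.simple_mul_simple_cancel_right]
      · by_cases h : t = cs.simple i <;>
          simp [h, add_assoc, CharTwo.add_self_eq_zero])

theorem prep_apply (i : B) (t : W) (e : ZMod 2) :
    prep cs i (t, e) = (cs.simple i * t * cs.simple i, e + if t = cs.simple i then 1 else 0) :=
  rfl

theorem simple_pow_inv (i i' : B) (k : ℕ) :
    ((cs.simple i * cs.simple i') ^ k)⁻¹ = (cs.simple i' * cs.simple i) ^ k := by
  rw [← inv_pow, mul_inv_rev, cs.inv_simple, cs.inv_simple]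

theorem simple_mul_pow (i i' : B) (k : ℕ) :
    cs.simple i' * (cs.simple i * cs.simple i') ^ k
      = (cs.simple i' * cs.simple i) ^ k * cs.simple i' := by
  induction k with
  | zero => simp
  | succ k ih =>
    calc cs.simple i' * (cs.simple i * cs.simple i') ^ (k+1)
        = cs.simple i' * (cs.simple i * cs.simple i') ^ k * (cs.simple i * cs.simple i') := by
          rw [pow_succ, mul_assoc]
      _ = (cs.simple i' * cs.simple i) ^ k * cs.simple i' * (cs.simple i * cs.simple i') := by
          rw [ih]
      _ = (cs.simple i' * cs.simple i) ^ (k+1) * cs.simple i' := by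
          rw [pow_succ]; group

theorem prep_mul_pow_apply (i i' : B) (k : ℕ) (t : W) (e : ZMod 2) :
    ((prep cs i * prep cs i') ^ k) (t, e) =
      ((cs.simple i * cs.simple i') ^ k * t * (cs.simple i' * cs.simple i) ^ k,
        e + ∑ l ∈ Finset.range (2 * k),
          if t = (cs.simple i' * cs.simple i) ^ l * cs.simple i' then 1 else 0) := by
  induction k with
  | zero => simp
  | succ k ih =>
    rw [pow_succ' (prep cs i * prep cs i'), Equiv.Perm.mul_apply, ih,
      Equiv.Perm.mul_apply, prep_apply, prep_apply]
    set s := cs.simple i with hs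
    set s' := cs.simple i' with hs'
    have hinv1 : ((s * s') ^ k)⁻¹ = (s' * s) ^ k := simple_pow_inv cs i i' k
    have hinv2 : ((s' * s) ^ k)⁻¹ = (s * s') ^ k := simple_pow_inv cs i' i k
    have hc : ∀ m : ℕ, (s' * s) ^ m * (s' * (s * s') ^ k) = (s' * s) ^ (m + k) * s' := by
      intro m
      rw [simple_mul_pow cs i i' k, ← mul_assoc, ← pow_add]
    have cj : ∀ a b c x : W, a * x * b = c ↔ x = a⁻¹ * c * b⁻¹ := by
      intro a b c x
      rw [eq_mul_inv_iff_mul_eq, eq_inv_mul_iff_mul_eq, ← mul_assoc]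
    have e1 : ((s * s') ^ k * t * (s' * s) ^ k = s')
        ↔ (t = (s' * s) ^ (2 * k) * s') := by
      rw [cj]
      rw [show ((s * s') ^ k)⁻¹ * s' * ((s' * s) ^ k)⁻¹ = (s' * s) ^ (2 * k) * s' by
        rw [hinv1, hinv2, mul_assoc, hc k, two_mul]]
    have e2 : (s' * ((s * s') ^ k * t * (s' * s) ^ k) * s' = s)
        ↔ (t = (s' * s) ^ (2 * k + 1) * s') := by
      rw [cj, cj]
      rw [show ((s * s') ^ k)⁻¹ * (s'⁻¹ * s * s'⁻¹) * ((s' * s) ^ k)⁻¹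
          = (s' * s) ^ (2 * k + 1) * s' by
        rw [cs.inv_simple, hinv1, hinv2]
        calc (s' * s) ^ k * (s' * s * s') * (s * s') ^ k
            = (s' * s) ^ (k + 1) * (s' * (s * s') ^ k) := by
              rw [pow_succ]; group
          _ = (s' * s) ^ (k + 1 + k) * s' := hc (k + 1)
          _ = (s' * s) ^ (2 * k + 1) * s' := by ring_nf]
    simp only [Prod.mk.injEq]
    constructor
    · rw [pow_succ' (s * s'), pow_succ (s' * s)]
      group
    · rw [show 2 * (k + 1) = 2 * k + 1 + 1 by ring, Finset.sum_range_succ,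
        Finset.sum_range_succ, if_congr e1 rfl rfl, if_congr e2 rfl rfl]
      ring

theorem prep_liftable : M.IsLiftable (prep cs) := by
  intro i i'
  ext ⟨t, e⟩
  · rw [prep_mul_pow_apply, cs.simple_mul_simple_pow i i', cs.simple_mul_simple_pow' i i']
    simp
  · rw [prep_mul_pow_apply]
    simp only [Equiv.Perm.one_apply]
    have hper : ∀ l : ℕ, (cs.simple i' * cs.simple i) ^ (l + M i i')
        = (cs.simple i' * cs.simple i) ^ l := by
      intro l
      rw [pow_add, cs.simple_mul_simple_pow' i i', mul_one]
    rw [two_mul, Finset.sum_range_add]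
    have : ∀ l ∈ Finset.range (M i i'),
        (if t = (cs.simple i' * cs.simple i) ^ (M i i' + l) * cs.simple i' then (1 : ZMod 2) else 0)
          = (if t = (cs.simple i' * cs.simple i) ^ l * cs.simple i' then (1 : ZMod 2) else 0) := by
      intro l _
      have h2 : (cs.simple i' * cs.simple i) ^ (M i i' + l)
          = (cs.simple i' * cs.simple i) ^ l := by rw [add_comm, hper]
      rw [h2]
    rw [Finset.sum_congr rfl this, CharTwo.add_self_eq_zero, add_zero]


noncomputable def permRep : W →* Equiv.Perm (W × ZMod 2) := cs.lift ⟨prep cs, prep_liftable cs⟩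

theorem permRep_simple (i : B) : permRep cs (cs.simple i) = prep cs i :=
  cs.lift_apply_simple (prep_liftable cs) i

/-- Count (mod 2) of `t` in the right inversion sequence of `ω`. -/
noncomputable def nu (ω : List B) (t : W) : ZMod 2 :=
  ((cs.rightInvSeq ω).map (fun x => if x = t then (1 : ZMod 2) else 0)).sum

noncomputable def eta (w t : W) : ZMod 2 := ((permRep cs w) (t, 0)).2

theorem conj_eq_iff (a b c x : W) : a * x * b = c ↔ x = a⁻¹ * c * b⁻¹ := by
  rw [eq_mul_inv_iff_mul_eq, eq_inv_mul_iff_mul_eq, ← mul_assoc]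

theorem rightInvSeq_cons' (i : B) (ω : List B) :
    cs.rightInvSeq (i :: ω)
      = ((cs.wordProd ω)⁻¹ * cs.simple i * cs.wordProd ω) :: cs.rightInvSeq ω := rfl

theorem permRep_wordProd (ω : List B) (t : W) (e : ZMod 2) :
    permRep cs (cs.wordProd ω) (t, e)
      = (cs.wordProd ω * t * (cs.wordProd ω)⁻¹, e + nu cs ω t) := by
  induction ω with
  | nil => simp [nu]
  | cons i ω ih =>
    rw [cs.wordProd_cons, map_mul, Equiv.Perm.mul_apply, ih, permRep_simple, prep_apply]
    have hiff : (cs.wordProd ω * t * (cs.wordProd ω)⁻¹ = cs.simple i)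
        ↔ ((cs.wordProd ω)⁻¹ * cs.simple i * cs.wordProd ω = t) :=
      (conj_eq_iff _ _ _ _).trans (by rw [inv_inv]; exact eq_comm)
    simp only [Prod.mk.injEq]
    constructor
    · rw [mul_inv_rev, cs.inv_simple]
      group
    · rw [if_congr hiff rfl rfl]
      rw [nu, nu, rightInvSeq_cons', List.map_cons, List.sum_cons]
      ring

theorem eta_wordProd (ω : List B) (t : W) : eta cs (cs.wordProd ω) t = nu cs ω t := by
  rw [eta, permRep_wordProd]
  exact zero_add _

theorem permRep_apply (w t : W) (e : ZMod 2) :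
    permRep cs w (t, e) = (w * t * w⁻¹, e + eta cs w t) := by
  obtain ⟨ω, rfl⟩ := cs.wordProd_surjective w
  rw [permRep_wordProd, eta_wordProd]

theorem eta_mul_simple (w : W) (i : B) (t : W) :
    eta cs (w * cs.simple i) t
      = eta cs w (cs.simple i * t * cs.simple i) + (if t = cs.simple i then 1 else 0) := by
  have : permRep cs (w * cs.simple i) (t, 0)
      = permRep cs w (prep cs i (t, 0)) := by
    rw [map_mul, Equiv.Perm.mul_apply, permRep_simple]
  rw [eta, this, prep_apply, permRep_apply]
  simp [add_comm]

theorem eta_eq_zero : ∀ (w t : W), cs.length w < cs.length (w * t) → eta cs w t = 0 := by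
  suffices h : ∀ n (w t : W), cs.length w = n → cs.length w < cs.length (w * t) →
      eta cs w t = 0 by
    intro w t hw; exact h _ w t rfl hw
  intro n
  induction n using Nat.strong_induction_on with
  | _ n ih =>
    intro w t hn h
    rcases eq_or_ne w 1 with rfl | hw
    · rw [eta, map_one]
      rfl
    · obtain ⟨j, hj⟩ := cs.exists_rightDescent_of_ne_one hw
      have hw'' : w = (w * cs.simple j) * cs.simple j := by
        rw [cs.simple_mul_simple_cancel_right]
      have hlen : cs.length (w * cs.simple j) < cs.length w := hj
      have hne : t ≠ cs.simple j := by
        rintro rfl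
        omega
      rw [hw'', eta_mul_simple, if_neg hne, add_zero]
      have harr : (w * cs.simple j) * (cs.simple j * t * cs.simple j)
          = w * t * cs.simple j := by
        simp [mul_assoc, cs.simple_mul_simple_cancel_left]
      refine ih (cs.length (w * cs.simple j)) (by omega) _ _ rfl ?_
      rw [harr]
      have hd := cs.length_mul_simple (w * t) j
      omega

theorem rightInvSeq_append (α β : List B) :
    cs.rightInvSeq (α ++ β)
      = (cs.rightInvSeq α).map (fun x => (cs.wordProd β)⁻¹ * x * cs.wordProd β)
        ++ cs.rightInvSeq β := by
  induction α with
  | nil => simp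
  | cons i α ih =>
    rw [List.cons_append, rightInvSeq_cons', rightInvSeq_cons', ih, List.map_cons,
      List.cons_append]
    congr 1
    rw [cs.wordProd_append, mul_inv_rev]
    group

theorem leftInvSeq_eq_map (α : List B) :
    cs.leftInvSeq α
      = (cs.rightInvSeq α).map (fun x => cs.wordProd α * x * (cs.wordProd α)⁻¹) := by
  induction α with
  | nil => simp
  | cons i α ih =>
    rw [rightInvSeq_cons',
      show cs.leftInvSeq (i :: α)
        = cs.simple i :: List.map (MulAut.conj (cs.simple i)) (cs.leftInvSeq α) from rfl,
      ih, List.map_cons, List.map_map]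
    congr 1
    · rw [cs.wordProd_cons, mul_inv_rev, cs.inv_simple]
      simp [mul_assoc, cs.simple_mul_simple_cancel_left, cs.simple_mul_simple_cancel_right]
    · apply List.map_congr_left
      intro x _
      simp only [Function.comp_apply, MulAut.conj_apply]
      rw [cs.wordProd_cons, mul_inv_rev, cs.inv_simple]
      group

theorem nu_eq_zero_of_not_mem (ω : List B) (t : W) (h : t ∉ cs.rightInvSeq ω) :
    nu cs ω t = 0 := by
  apply List.sum_eq_zero
  intro x hx
  obtain ⟨y, hy, rfl⟩ := List.mem_map.mp hx
  rw [if_neg]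
  rintro rfl
  exact h hy

theorem eta_reflection_self {t : W} (ht : cs.IsReflection t) : eta cs t t = 1 := by
  obtain ⟨u, i, htt⟩ := ht
  obtain ⟨α, rfl⟩ := cs.wordProd_surjective u
  set u := cs.wordProd α
  have hτ : cs.wordProd (α ++ i :: α.reverse) = t := by
    rw [cs.wordProd_append, cs.wordProd_cons, cs.wordProd_reverse, htt, mul_assoc]
  rw [show eta cs t t = nu cs (α ++ i :: α.reverse) t by
    nth_rewrite 1 [← hτ]
    rw [eta_wordProd]]
  rw [nu, rightInvSeq_append, rightInvSeq_cons']
  have hrev : cs.wordProd (List.reverse α) = u⁻¹ := cs.wordProd_reverse α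
  have hhead : (cs.wordProd α.reverse)⁻¹ * cs.simple i * cs.wordProd α.reverse = t := by
    rw [hrev, inv_inv, htt, mul_assoc]
  simp only [List.map_append, List.map_cons, List.sum_append, List.sum_cons]
  rw [hhead, if_pos rfl]
  have hS1 : ((cs.rightInvSeq α).map
      (fun x => (cs.wordProd (i :: α.reverse))⁻¹ * x * cs.wordProd (i :: α.reverse))).map
        (fun x => if x = t then (1 : ZMod 2) else 0)
      = (cs.rightInvSeq α).map (fun x => if x = cs.simple i then (1 : ZMod 2) else 0) := by
    rw [List.map_map]
    apply List.map_congr_left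
    intro x _
    simp only [Function.comp_apply]
    congr 1
    rw [cs.wordProd_cons, hrev, mul_inv_rev, cs.inv_simple, inv_inv, htt, conj_eq_iff]
    rw [show (u * cs.simple i)⁻¹ * (u * cs.simple i * u⁻¹) * (cs.simple i * u⁻¹)⁻¹
        = cs.simple i by
      rw [show (u * cs.simple i)⁻¹ * (u * cs.simple i * u⁻¹) * (cs.simple i * u⁻¹)⁻¹
          = (cs.simple i)⁻¹ by group, cs.inv_simple]]
  have hS2 : (cs.rightInvSeq α.reverse).map (fun x => if x = t then (1 : ZMod 2) else 0)
      = ((cs.rightInvSeq α).map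
          (fun x => if x = cs.simple i then (1 : ZMod 2) else 0)).reverse := by
    rw [cs.rightInvSeq_reverse, leftInvSeq_eq_map, List.map_reverse, List.map_map]
    congr 1
    apply List.map_congr_left
    intro x _
    simp only [Function.comp_apply]
    congr 1
    rw [htt, conj_eq_iff]
    rw [show (cs.wordProd α)⁻¹ * (u * cs.simple i * u⁻¹) * ((cs.wordProd α)⁻¹)⁻¹
        = cs.simple i by
      rw [show (cs.wordProd α)⁻¹ * (u * cs.simple i * u⁻¹) * ((cs.wordProd α)⁻¹)⁻¹
          = cs.simple i * 1 by simp only [u]; group, mul_one]]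
  rw [hS1, hS2, List.sum_reverse]
  ring_nf
  rw [show (∀ a : ZMod 2, a * 2 = 0) from fun a => by
    rw [mul_two, CharTwo.add_self_eq_zero]]
  ring


theorem eta_eq_one {w t : W} (ht : cs.IsReflection t)
    (h : cs.length (w * t) < cs.length w) : eta cs w t = 1 := by
  have hx : w = (w * t) * t := by rw [mul_assoc, ht.mul_self, mul_one]
  have h1 : eta cs (w * t) t = 0 := by
    apply eta_eq_zero
    rw [← hx]
    exact h
  have h2 : permRep cs w (t, 0) = permRep cs (w * t) (permRep cs t (t, 0)) := by
    nth_rewrite 1 [hx]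
    rw [map_mul, Equiv.Perm.mul_apply]
  rw [eta, h2, permRep_apply cs t t 0, eta_reflection_self cs ht, zero_add,
    show t * t * t⁻¹ = t by rw [ht.mul_self, one_mul, ht.inv], permRep_apply, h1, add_zero]

theorem strong_exchange (ω : List B) (t : W) (ht : cs.IsReflection t)
    (h : cs.length (cs.wordProd ω * t) < cs.length (cs.wordProd ω)) :
    ∃ j, ∃ _ : j < ω.length, cs.wordProd ω * t = cs.wordProd (ω.eraseIdx j) := by
  have h2 : nu cs ω t = 1 := by
    rw [← eta_wordProd]
    exact eta_eq_one cs ht h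
  have h3 : t ∈ cs.rightInvSeq ω := by
    by_contra hmem
    rw [nu_eq_zero_of_not_mem cs ω t hmem] at h2
    exact absurd h2.symm one_ne_zero
  obtain ⟨j, hj, hjt⟩ := List.getElem_of_mem h3
  refine ⟨j, by simpa using hj, ?_⟩
  have h4 := cs.wordProd_mul_getD_rightInvSeq ω j
  rw [List.getD_eq_getElem _ _ hj, hjt] at h4
  exact h4


theorem exists_reduced_sublist' : ∀ (n : ℕ) (δ : List B), δ.length = n →
    ∃ σ : List B, σ.Sublist δ ∧ cs.IsReduced σ ∧ cs.wordProd σ = cs.wordProd δ := by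
  intro n
  induction n using Nat.strong_induction_on with
  | _ n ih =>
    intro δ hn
    by_cases hred : cs.IsReduced δ
    · exact ⟨δ, List.Sublist.refl δ, hred, rfl⟩
    · have hP : ¬ cs.IsReduced (δ.take δ.length) := by rwa [List.take_length]
      have hex : ∃ k, ¬ cs.IsReduced (δ.take k) := ⟨δ.length, hP⟩
      have hk1 : ¬ cs.IsReduced (δ.take (Nat.find hex)) := Nat.find_spec hex
      have hkle : Nat.find hex ≤ δ.length := Nat.find_min' hex hP
      have hk0 : Nat.find hex ≠ 0 := by
        intro h0
        rw [h0] at hk1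
        exact hk1 (by simp [CoxeterSystem.IsReduced])
      obtain ⟨j, hjk⟩ : ∃ j, Nat.find hex = j + 1 := ⟨Nat.find hex - 1, by omega⟩
      have hjred : cs.IsReduced (δ.take j) := by
        have := Nat.find_min hex (show j < Nat.find hex by omega)
        exact not_not.mp this
      have hjlt : j < δ.length := by omega
      have htake : δ.take (j+1) = δ.take j ++ [δ[j]] := by
        rw [List.take_succ, List.getElem?_eq_getElem hjlt]
        rfl
      have hylen : cs.length (cs.wordProd (δ.take j)) = j := by
        rw [hjred, List.length_take]
        omega
      have hys : cs.length (cs.wordProd (δ.take j) * cs.simple δ[j])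
          < cs.length (cs.wordProd (δ.take j)) := by
        have hd := cs.length_mul_simple (cs.wordProd (δ.take j)) δ[j]
        rcases hd with hd | hd
        · exfalso
          apply hk1
          rw [hjk, CoxeterSystem.IsReduced, htake, cs.wordProd_append,
            cs.wordProd_singleton, hd, hylen]
          simp
          omega
        · omega
      obtain ⟨j', hj', herase⟩ := strong_exchange cs (δ.take j) (cs.simple δ[j])
        (cs.isReflection_simple δ[j]) hys
      have hprod : cs.wordProd ((δ.take j).eraseIdx j' ++ δ.drop (j+1)) = cs.wordProd δ := by
        conv_rhs => rw [← List.take_append_drop (j+1) δ]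
        rw [cs.wordProd_append, cs.wordProd_append, ← herase, htake, cs.wordProd_append,
          cs.wordProd_singleton]
      have hsub : ((δ.take j).eraseIdx j' ++ δ.drop (j+1)).Sublist δ := by
        conv_rhs => rw [← List.take_append_drop (j+1) δ]
        apply List.Sublist.append _ (List.Sublist.refl _)
        apply List.Sublist.trans (List.eraseIdx_sublist (δ.take j) j')
        rw [htake]
        exact List.sublist_append_left _ _
      have hlt : ((δ.take j).eraseIdx j' ++ δ.drop (j+1)).length < n := by
        rw [List.length_append]
        have h5 : ((δ.take j).eraseIdx j').length + 1 = (δ.take j).length :=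
          List.length_eraseIdx_add_one hj'
        have h6 : (δ.take j).length = j := by rw [List.length_take]; omega
        have h7 : (δ.drop (j+1)).length = δ.length - (j+1) := List.length_drop
        omega
      obtain ⟨σ, hσ1, hσ2, hσ3⟩ := ih _ hlt _ rfl
      exact ⟨σ, hσ1.trans hsub, hσ2, by rw [hσ3, hprod]⟩

theorem exists_reduced_sublist (δ : List B) :
    ∃ σ : List B, σ.Sublist δ ∧ cs.IsReduced σ ∧ cs.wordProd σ = cs.wordProd δ :=
  exists_reduced_sublist' cs δ.length δ rfl

/-- A single step in the reflection-chain Bruhat order. -/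
def BStep (x y : W) : Prop :=
  ∃ t : W, cs.IsReflection t ∧ y = x * t ∧ cs.length x < cs.length y

/-- The reflection-chain Bruhat order. -/
def BLE : W → W → Prop := Relation.ReflTransGen (BStep cs)

/-- Demazure product with one simple reflection. -/
noncomputable def demS (x : W) (i : B) : W :=
  if cs.length x < cs.length (x * cs.simple i) then x * cs.simple i else x

theorem bstep_up {x : W} {i : B} (h : cs.length x < cs.length (x * cs.simple i)) :
    BStep cs x (x * cs.simple i) := ⟨cs.simple i, cs.isReflection_simple i, rfl, h⟩

theorem bstep_down {x : W} {i : B} (h : cs.length (x * cs.simple i) < cs.length x) :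
    BStep cs (x * cs.simple i) x :=
  ⟨cs.simple i, cs.isReflection_simple i, by rw [cs.simple_mul_simple_cancel_right], h⟩

theorem ble_demS (x : W) (i : B) : BLE cs x (demS cs x i) := by
  rw [demS]
  split
  · exact Relation.ReflTransGen.single (bstep_up cs (by assumption))
  · exact Relation.ReflTransGen.refl

theorem main_induction : ∀ n : ℕ,
    (∀ ω σ : List B, ω.length = n → cs.IsReduced ω → σ.Sublist ω → cs.IsReduced σ →
        BLE cs (cs.wordProd σ) (cs.wordProd ω))
    ∧ (∀ y : W, cs.length y = n → ∀ x : W, BLE cs x y → ∀ i : B,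
        BLE cs (demS cs x i) (demS cs y i)) := by
  intro n
  induction n using Nat.strong_induction_on with
  | _ n ih =>
    have hA : ∀ ω σ : List B, ω.length = n → cs.IsReduced ω → σ.Sublist ω → cs.IsReduced σ →
        BLE cs (cs.wordProd σ) (cs.wordProd ω) := by
      intro ω σ hlen hred hsub hredσ
      rcases List.eq_nil_or_concat ω with rfl | ⟨ω₁, i, rfl⟩
      · rw [List.sublist_nil.mp hsub]
        exact Relation.ReflTransGen.refl
      · rw [List.concat_eq_append] at hlen hred hsub ⊢
        have hn1 : ω₁.length + 1 = n := by simpa using hlen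
        have hred₁ : cs.IsReduced ω₁ := by
          have := hred.take ω₁.length
          rwa [List.take_left] at this
        have hv : cs.wordProd (ω₁ ++ [i]) = cs.wordProd ω₁ * cs.simple i := by
          rw [cs.wordProd_append, cs.wordProd_singleton]
        have hlv : cs.length (cs.wordProd ω₁) < cs.length (cs.wordProd ω₁ * cs.simple i) := by
          have e₁ : cs.length (cs.wordProd ω₁) = ω₁.length := hred₁
          have e₂ : cs.length (cs.wordProd (ω₁ ++ [i])) = ω₁.length + 1 := by
            have e₃ : cs.length (cs.wordProd (ω₁ ++ [i])) = (ω₁ ++ [i]).length := hred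
            rw [e₃, List.length_append, List.length_singleton]
          rw [← hv, e₁, e₂]
          omega
        rcases List.sublist_append_iff.mp hsub with ⟨σ₁, σ₂, rfl, hs1, hs2⟩
        rcases List.sublist_singleton.mp hs2 with rfl | rfl
        · rw [List.append_nil] at hredσ ⊢
          have h1 : BLE cs (cs.wordProd σ₁) (cs.wordProd ω₁) :=
            (ih ω₁.length (by omega)).1 ω₁ σ₁ rfl hred₁ hs1 hredσ
          exact h1.tail (by rw [hv]; exact bstep_up cs hlv)
        · have hredσ₁ : cs.IsReduced σ₁ := by
            have := hredσ.take σ₁.length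
            rwa [List.take_left] at this
          have h1 : BLE cs (cs.wordProd σ₁) (cs.wordProd ω₁) :=
            (ih ω₁.length (by omega)).1 ω₁ σ₁ rfl hred₁ hs1 hredσ₁
          have h2 := (ih ω₁.length (by omega)).2 (cs.wordProd ω₁) hred₁
            (cs.wordProd σ₁) h1 i
          have hσv : cs.wordProd (σ₁ ++ [i]) = cs.wordProd σ₁ * cs.simple i := by
            rw [cs.wordProd_append, cs.wordProd_singleton]
          have hlσ : cs.length (cs.wordProd σ₁) < cs.length (cs.wordProd σ₁ * cs.simple i) := by
            have e₁ : cs.length (cs.wordProd σ₁) = σ₁.length := hredσ₁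
            have e₂ : cs.length (cs.wordProd (σ₁ ++ [i])) = σ₁.length + 1 := by
              have e₃ : cs.length (cs.wordProd (σ₁ ++ [i])) = (σ₁ ++ [i]).length := hredσ
              rw [e₃, List.length_append, List.length_singleton]
            rw [← hσv, e₁, e₂]
            omega
          have e1 : demS cs (cs.wordProd σ₁) i = cs.wordProd (σ₁ ++ [i]) := by
            rw [demS, if_pos hlσ, hσv]
          have e2 : demS cs (cs.wordProd ω₁) i = cs.wordProd (ω₁ ++ [i]) := by
            rw [demS, if_pos hlv, hv]
          rwa [e1, e2] at h2
    refine ⟨hA, ?_⟩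
    intro y hy x hxy i
    rcases Relation.ReflTransGen.cases_tail hxy with rfl | ⟨y₀, hx0, hstep⟩
    · exact Relation.ReflTransGen.refl
    · obtain ⟨t, hrt, hyy, hly⟩ := hstep
      have hy0 : cs.length y₀ < n := by omega
      have ihZ := (ih _ hy0).2 y₀ rfl x hx0 i
      have key : BLE cs (demS cs y₀ i) (demS cs y i) := by
        by_cases h₀ : cs.length y₀ < cs.length (y₀ * cs.simple i) <;>
          by_cases h₁ : cs.length y < cs.length (y * cs.simple i)
        · -- both go up
          rw [demS, if_pos h₀, demS, if_pos h₁]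
          apply Relation.ReflTransGen.single
          refine ⟨cs.simple i * t * cs.simple i, ?_, ?_, ?_⟩
          · have := hrt.conj (cs.simple i)
            rwa [cs.inv_simple] at this
          · rw [hyy]
            simp [mul_assoc, cs.simple_mul_simple_cancel_left]
          · have hle : cs.length (y₀ * cs.simple i) ≤ cs.length y₀ + 1 := by
              have := cs.length_mul_le y₀ (cs.simple i)
              rwa [cs.length_simple] at this
            omega
        · -- y₀ up, y down: the hard case
          rw [demS, if_pos h₀, demS, if_neg h₁]
          have h₁' : cs.length (y * cs.simple i) < cs.length y := by
            have := cs.length_mul_simple_ne y i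
            omega
          obtain ⟨κ, hκred, hκprod⟩ := cs.exists_reduced_word' (y * cs.simple i)
          have hκlen : κ.length = cs.length (y * cs.simple i) := by
            have h5 : cs.length (cs.wordProd κ) = κ.length := hκred
            rw [← hκprod] at h5
            omega
          have hyn : cs.length y = cs.length (y * cs.simple i) + 1 := by
            have hle : cs.length y ≤ cs.length (y * cs.simple i) + 1 := by
              have h5 : y = (y * cs.simple i) * cs.simple i := by
                rw [cs.simple_mul_simple_cancel_right]
              nth_rewrite 1 [h5]
              have := cs.length_mul_le (y * cs.simple i) (cs.simple i)
              rwa [cs.length_simple] at this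
            omega
          have hprodω : cs.wordProd (κ ++ [i]) = y := by
            rw [cs.wordProd_append, cs.wordProd_singleton, ← hκprod,
              cs.simple_mul_simple_cancel_right]
          have hωred : cs.IsReduced (κ ++ [i]) := by
            rw [CoxeterSystem.IsReduced, hprodω, List.length_append, hκlen]
            simp [hyn]
          have hyt : cs.length (cs.wordProd (κ ++ [i]) * t) < cs.length (cs.wordProd (κ ++ [i])) := by
            rw [hprodω, hyy, mul_assoc, hrt.mul_self, mul_one, ← hyy]
            exact hly
          obtain ⟨j, hj, heq⟩ := strong_exchange cs (κ ++ [i]) t hrt hyt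
          have hy₀ : y₀ = cs.wordProd ((κ ++ [i]).eraseIdx j) := by
            rw [← heq, hprodω, hyy, mul_assoc, hrt.mul_self, mul_one]
          rcases lt_or_ge j κ.length with hjκ | hjκ
          · rw [List.eraseIdx_append_of_lt_length hjκ] at hy₀
            have hy₀s : y₀ * cs.simple i = cs.wordProd (κ.eraseIdx j) := by
              rw [hy₀, cs.wordProd_append, cs.wordProd_singleton,
                cs.simple_mul_simple_cancel_right]
            obtain ⟨σ, hσsub, hσred, hσprod⟩ := exists_reduced_sublist cs (κ.eraseIdx j)
            have hA1 : BLE cs (cs.wordProd σ) (cs.wordProd κ) :=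
              (ih κ.length (by omega)).1 κ σ rfl hκred
                (hσsub.trans (List.eraseIdx_sublist κ j)) hσred
            have h6 : BLE cs (y₀ * cs.simple i) (y * cs.simple i) := by
              rw [hy₀s, hκprod, ← hσprod]
              exact hA1
            exact h6.tail (bstep_down cs h₁')
          · have hj2 : j = κ.length := by
              have : j < κ.length + 1 := by simpa using hj
              omega
            have hy₀2 : y₀ = cs.wordProd κ := by
              rw [hy₀, hj2, List.eraseIdx_append_of_length_le (le_refl κ.length)]
              simp
            have h7 : y₀ * cs.simple i = y := by
              rw [hy₀2, ← hκprod, cs.simple_mul_simple_cancel_right]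
            rw [h7]
            exact Relation.ReflTransGen.refl
        · -- y₀ down, y up
          rw [demS, if_neg h₀, demS, if_pos h₁]
          exact (Relation.ReflTransGen.single ⟨t, hrt, hyy, hly⟩).tail (bstep_up cs h₁)
        · -- both down
          rw [demS, if_neg h₀, demS, if_neg h₁]
          exact Relation.ReflTransGen.single ⟨t, hrt, hyy, hly⟩
      exact ihZ.trans key

theorem subword_of_ble {u w : W} (h : BLE cs u w) :
    ∀ ω : List B, cs.IsReduced ω → cs.wordProd ω = w →
      ∃ σ, σ.Sublist ω ∧ cs.IsReduced σ ∧ cs.wordProd σ = u := by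
  induction h with
  | refl => exact fun ω hred hw => ⟨ω, List.Sublist.refl ω, hred, hw⟩
  | @tail b c h1 h2 ih =>
    intro ω hred hw
    obtain ⟨t, hrt, hc, hlen⟩ := h2
    have hbt : cs.wordProd ω * t = b := by
      rw [hw, hc, mul_assoc, hrt.mul_self, mul_one]
    have hl : cs.length (cs.wordProd ω * t) < cs.length (cs.wordProd ω) := by
      rw [hbt, hw]
      exact hlen
    obtain ⟨j, hj, heq⟩ := strong_exchange cs ω t hrt hl
    obtain ⟨σ₁, hsub₁, hred₁, hprod₁⟩ := exists_reduced_sublist cs (ω.eraseIdx j)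
    obtain ⟨σ, s1, s2, s3⟩ := ih σ₁ hred₁ (by rw [hprod₁, ← heq, hbt])
    exact ⟨σ, s1.trans (hsub₁.trans (List.eraseIdx_sublist ω j)), s2, s3⟩

theorem bruhatLE_iff_ble (u w : W) : BruhatLE cs u w ↔ BLE cs u w := by
  constructor
  · rintro ⟨ω, hred, hw, σ, hsub, hredσ, hu⟩
    have := (main_induction cs ω.length).1 ω σ rfl hred hsub hredσ
    rwa [hu, hw] at this
  · intro h
    obtain ⟨ω, hred, hw⟩ := cs.exists_reduced_word' w
    obtain ⟨σ, s1, s2, s3⟩ := subword_of_ble cs h ω hred hw.symm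
    exact ⟨ω, hred, hw.symm, σ, s1, s2, s3⟩

theorem bruhatLE_refl (w : W) : BruhatLE cs w w := by
  obtain ⟨ω, hred, hw⟩ := cs.exists_reduced_word' w
  exact ⟨ω, hred, hw.symm, ω, List.Sublist.refl ω, hred, hw.symm⟩

theorem bruhatLE_trans {x y z : W} (h1 : BruhatLE cs x y) (h2 : BruhatLE cs y z) :
    BruhatLE cs x z := by
  rw [bruhatLE_iff_ble] at h1 h2 ⊢
  exact h1.trans h2

theorem bruhatLE_length_le {x y : W} (h : BruhatLE cs x y) : cs.length x ≤ cs.length y := by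
  obtain ⟨ω, hred, hw, σ, hsub, hredσ, hu⟩ := h
  have e1 : cs.length x = σ.length := by
    rw [← hu]
    exact hredσ
  have e2 : cs.length y = ω.length := by
    rw [← hw]
    exact hred
  rw [e1, e2]
  exact hsub.length_le

theorem bruhatLE_antisymm {x y : W} (h1 : BruhatLE cs x y) (h2 : BruhatLE cs y x) : x = y := by
  obtain ⟨ω, hred, hw, σ, hsub, hredσ, hu⟩ := h1
  have e1 : cs.length x = σ.length := by
    rw [← hu]
    exact hredσ
  have e2 : cs.length y = ω.length := by
    rw [← hw]
    exact hred
  have hle := bruhatLE_length_le cs h2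
  have hll := hsub.length_le
  have heq := hsub.eq_of_length (by omega)
  rw [← hu, ← hw, heq]

theorem demS_mono {x y : W} (h : BruhatLE cs x y) (i : B) :
    BruhatLE cs (demS cs x i) (demS cs y i) := by
  rw [bruhatLE_iff_ble] at h ⊢
  exact (main_induction cs (cs.length y)).2 y rfl x h i

theorem bruhatLE_demS (x : W) (i : B) : BruhatLE cs x (demS cs x i) := by
  rw [bruhatLE_iff_ble]
  exact ble_demS cs x i

theorem upRWord_nil (v : W) : upRWord cs v [] = v := rfl

theorem upRWord_cons (v : W) (i : B) (ω : List B) :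
    upRWord cs v (i :: ω) = upRWord cs (demS cs v i) ω := rfl

theorem upRWord_concat (v : W) (ω : List B) (i : B) :
    upRWord cs v (ω ++ [i]) = demS cs (upRWord cs v ω) i := by
  rw [upRWord, List.foldl_append]
  rfl

theorem upRWord_mono (ω : List B) : ∀ {x y : W}, BruhatLE cs x y →
    BruhatLE cs (upRWord cs x ω) (upRWord cs y ω) := by
  induction ω with
  | nil => exact fun h => h
  | cons i ω ihω =>
    intro x y h
    rw [upRWord_cons, upRWord_cons]
    exact ihω (demS_mono cs h i)

theorem upRWord_sublist {σ ω : List B} (h : σ.Sublist ω) (x : W) :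
    BruhatLE cs (upRWord cs x σ) (upRWord cs x ω) := by
  induction h generalizing x with
  | slnil => exact bruhatLE_refl cs x
  | @cons σ' ω' i h ihh =>
    rw [upRWord_cons]
    exact bruhatLE_trans cs (ihh x) (upRWord_mono cs ω' (bruhatLE_demS cs x i))
  | @cons_cons σ' ω' i h ihh =>
    rw [upRWord_cons, upRWord_cons]
    exact ihh _

theorem upRWord_spec (α : List B) (hred : cs.IsReduced α) (x : W) :
    (∃ y, BruhatLE cs y (cs.wordProd α) ∧ upRWord cs x α = x * y ∧
        cs.length (x * y) = cs.length x + cs.length y)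
    ∧ (∀ y, BruhatLE cs y (cs.wordProd α) →
        cs.length (x * y) = cs.length x + cs.length y →
        BruhatLE cs (x * y) (upRWord cs x α)) := by
  induction α using List.reverseRecOn generalizing x with
  | nil =>
    constructor
    · refine ⟨1, ?_, by rw [upRWord_nil, mul_one], by simp⟩
      rw [cs.wordProd_nil]
      exact bruhatLE_refl cs 1
    · intro y hy _
      have h0 : cs.length y = 0 := by
        have := bruhatLE_length_le cs hy
        simpa using this
      have h1 : y = 1 := cs.length_eq_zero_iff.mp h0
      rw [h1, mul_one, upRWord_nil]
      exact bruhatLE_refl cs x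
  | append_singleton α i ihα =>
    have hred₁ : cs.IsReduced α := by
      have := hred.take α.length
      rwa [List.take_left] at this
    obtain ⟨⟨y₁, hy₁, hz₁, hl₁⟩, hb₁⟩ := ihα hred₁ x
    have e₁ : cs.length (cs.wordProd α) = α.length := hred₁
    have e₂ : cs.length (cs.wordProd (α ++ [i])) = α.length + 1 := by
      have e₃ : cs.length (cs.wordProd (α ++ [i])) = (α ++ [i]).length := hred
      rw [e₃, List.length_append, List.length_singleton]
    have hva : BruhatLE cs (cs.wordProd α) (cs.wordProd (α ++ [i])) :=
      ⟨α ++ [i], hred, rfl, α, List.sublist_append_left α [i], hred₁, rfl⟩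
    rw [upRWord_concat, hz₁]
    have partB : ∀ y, BruhatLE cs y (cs.wordProd (α ++ [i])) →
        cs.length (x * y) = cs.length x + cs.length y →
        BruhatLE cs (x * y) (demS cs (x * y₁) i) := by
      intro y hy hl
      obtain ⟨σ, hσsub, hσred, hσprod⟩ :=
        subword_of_ble cs ((bruhatLE_iff_ble cs _ _).mp hy) (α ++ [i]) hred rfl
      rcases List.sublist_append_iff.mp hσsub with ⟨τ₁, τ₂, rfl, ht1, ht2⟩
      rcases List.sublist_singleton.mp ht2 with rfl | rfl
      · rw [List.append_nil] at hσred hσprod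
        have hyv₁ : BruhatLE cs y (cs.wordProd α) := ⟨α, hred₁, rfl, τ₁, ht1, hσred, hσprod⟩
        have h3 := hb₁ y hyv₁ hl
        rw [hz₁] at h3
        exact bruhatLE_trans cs h3 (bruhatLE_demS cs (x * y₁) i)
      · have hτred : cs.IsReduced τ₁ := by
          have := hσred.take τ₁.length
          rwa [List.take_left] at this
        have hyτ : y = cs.wordProd τ₁ * cs.simple i := by
          rw [← hσprod, cs.wordProd_append, cs.wordProd_singleton]
        have hτv₁ : BruhatLE cs (cs.wordProd τ₁) (cs.wordProd α) :=
          ⟨α, hred₁, rfl, τ₁, ht1, hτred, rfl⟩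
        have l1 : cs.length (cs.wordProd τ₁) = τ₁.length := hτred
        have l2 : cs.length y = τ₁.length + 1 := by
          have l4 : cs.length (cs.wordProd (τ₁ ++ [i])) = (τ₁ ++ [i]).length := hσred
          rw [← hσprod, l4, List.length_append, List.length_singleton]
        have l3 : cs.length (x * cs.wordProd τ₁)
            = cs.length x + cs.length (cs.wordProd τ₁) := by
          have ha : cs.length (x * y) ≤ cs.length (x * cs.wordProd τ₁) + 1 := by
            rw [hyτ, ← mul_assoc]
            have := cs.length_mul_le (x * cs.wordProd τ₁) (cs.simple i)
            rwa [cs.length_simple] at this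
          have hbb : cs.length (x * cs.wordProd τ₁)
              ≤ cs.length x + cs.length (cs.wordProd τ₁) := cs.length_mul_le _ _
          omega
        have hxy : x * cs.wordProd τ₁ * cs.simple i = x * y := by
          rw [hyτ, mul_assoc]
        have hcond : cs.length (x * cs.wordProd τ₁)
            < cs.length (x * cs.wordProd τ₁ * cs.simple i) := by
          rw [hxy, hl, l2, l3, l1]
          omega
        have h6 : demS cs (x * cs.wordProd τ₁) i = x * y := by
          rw [demS, if_pos hcond, hxy]
        have h5 := demS_mono cs (hb₁ (cs.wordProd τ₁) hτv₁ l3) i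
        rw [hz₁] at h5
        rw [← h6]
        exact h5
    by_cases hlt : cs.length (x * y₁) < cs.length (x * y₁ * cs.simple i)
    · refine ⟨?_, partB⟩
      have h8 : cs.length (x * y₁ * cs.simple i) = cs.length x + cs.length y₁ + 1 := by
        rcases cs.length_mul_simple (x * y₁) i with hd | hd <;> omega
      have hy₁s : cs.length (y₁ * cs.simple i) = cs.length y₁ + 1 := by
        have hub : cs.length (y₁ * cs.simple i) ≤ cs.length y₁ + 1 := by
          have := cs.length_mul_le y₁ (cs.simple i)
          rwa [cs.length_simple] at this
        have h9 : cs.length (x * (y₁ * cs.simple i))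
            ≤ cs.length x + cs.length (y₁ * cs.simple i) := cs.length_mul_le _ _
        rw [← mul_assoc] at h9
        omega
      obtain ⟨σ₁, hσ1, hσ2, hσ3⟩ :=
        subword_of_ble cs ((bruhatLE_iff_ble cs _ _).mp hy₁) α hred₁ rfl
      have hyred : cs.IsReduced (σ₁ ++ [i]) := by
        rw [CoxeterSystem.IsReduced, cs.wordProd_append, cs.wordProd_singleton, hσ3,
          List.length_append, List.length_singleton]
        have h10 : cs.length y₁ = σ₁.length := by
          rw [← hσ3]
          exact hσ2
        omega
      have hyle : BruhatLE cs (y₁ * cs.simple i) (cs.wordProd (α ++ [i])) :=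
        ⟨α ++ [i], hred, rfl, σ₁ ++ [i], hσ1.append (List.Sublist.refl [i]), hyred,
          by rw [cs.wordProd_append, cs.wordProd_singleton, hσ3]⟩
      refine ⟨y₁ * cs.simple i, hyle, ?_, ?_⟩
      · rw [demS, if_pos hlt, mul_assoc]
      · rw [← mul_assoc, h8, hy₁s]
        omega
    · refine ⟨?_, partB⟩
      refine ⟨y₁, bruhatLE_trans cs hy₁ hva, ?_, hl₁⟩
      rw [demS, if_neg hlt]

theorem upRWord_eq_of_reduced {α β : List B} (hα : cs.IsReduced α) (hβ : cs.IsReduced β)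
    (hprod : cs.wordProd α = cs.wordProd β) (x : W) : upRWord cs x α = upRWord cs x β := by
  obtain ⟨⟨y₁, h1, h2, h3⟩, _⟩ := upRWord_spec cs α hα x
  obtain ⟨⟨y₂, g1, g2, g3⟩, _⟩ := upRWord_spec cs β hβ x
  have d1 : BruhatLE cs (upRWord cs x α) (upRWord cs x β) := by
    rw [h2]
    exact (upRWord_spec cs β hβ x).2 y₁ (by rw [← hprod]; exact h1) h3
  have d2 : BruhatLE cs (upRWord cs x β) (upRWord cs x α) := by
    rw [g2]
    exact (upRWord_spec cs α hα x).2 y₂ (by rw [hprod]; exact g1) g3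
  exact bruhatLE_antisymm cs d1 d2

end Aux

/-- Monotonicity of the Demazure product: if `u ≤ u'` and `v ≤ v'` in the strong Bruhat
order, then `u ∘ v ≤ u' ∘ v'`. -/
theorem stmt2 (u u' v v' : W) (hu : BruhatLE cs u u') (hv : BruhatLE cs v v') :
    BruhatLE cs (dem cs u v) (dem cs u' v') := by
  obtain ⟨σ, hsub, hredσ, hprodσ⟩ := subword_of_ble cs ((bruhatLE_iff_ble cs v v').mp hv)
    (rword cs v') (rword_isReduced cs v') (rword_wordProd cs v')
  have e1 : upRWord cs u (rword cs v) = upRWord cs u σ :=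
    upRWord_eq_of_reduced cs (rword_isReduced cs v) hredσ
      (by rw [rword_wordProd, hprodσ]) u
  have e2 := upRWord_sublist cs hsub u
  have e3 := upRWord_mono cs (rword cs v') hu
  show BruhatLE cs (upRWord cs u (rword cs v)) (upRWord cs u' (rword cs v'))
  rw [e1]
  exact bruhatLE_trans cs e2 e3

end PaperBase
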